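/- The set of rational numbers { s_{D,p}(r)/r : r ≥ 1 } has a minimum; that is, there exists r₀ ≥ 1 such that for every r ≥ 1 one has s_{D,p}(r₀)/r₀ ≤ s_{D,p}(r)/r. -/

import Mathlib

open scoped BigOperators
open scoped Classical

/-- `sp p u` is the sum of the base-`p` digits of `u`. -/
def sp (p u : ℕ) : ℕ := (Nat.digits p u).sum

variable {ι : Type} [Fintype ι]

/-- The coordinatewise sum `Σ_{d ∈ D} u_d · d`. -/
def sigmaSum (D : Finset (ι → ℕ)) (U : D → ℕ) (k : ι) : ℕ :=
  ∑ d, U d * (d : ι → ℕ) k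

/-- Membership in the set `E_{D,p}(r)`. -/
def memE (p : ℕ) (D : Finset (ι → ℕ)) (r : ℕ) (U : D → ℕ) : Prop :=
  (∀ d, U d ≤ p ^ r - 1) ∧
  (∀ k, (p ^ r - 1) ∣ sigmaSum D U k ∧ 0 < sigmaSum D U k)

/-- The `p`-weight `s_p(U)` of a tuple `U`. -/
def spU (p : ℕ) (D : Finset (ι → ℕ)) (U : D → ℕ) : ℕ := ∑ d, sp p (U d)

/-- `s_{D,p}(r)`, the minimal `p`-weight of an element of `E_{D,p}(r)`. -/
noncomputable def sDp (p : ℕ) (D : Finset (ι → ℕ)) (r : ℕ) : ℕ :=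
  sInf { s | ∃ U : D → ℕ, memE p D r U ∧ spU p D U = s }

/-- The `p`-density `δ_p(D)` of the set `D`. -/
noncomputable def density (p : ℕ) (D : Finset (ι → ℕ)) : ℝ :=
  (1 / ((p : ℝ) - 1)) * sInf { x : ℝ | ∃ r : ℕ, 1 ≤ r ∧ x = (sDp p D r : ℝ) / (r : ℝ) }

/-- A minimal solution in `E_{D,p}(r)`. -/
def minimalSol (p : ℕ) (D : Finset (ι → ℕ)) (r : ℕ) (U : D → ℕ) : Prop :=
  memE p D r U ∧ (spU p D U : ℝ) = ((p : ℝ) - 1) * (r : ℝ) * density p D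

/-- `φ_r(U) = (1/(p^r − 1)) Σ_{d ∈ D} u_d · d`. -/
def phiMap (p : ℕ) (D : Finset (ι → ℕ)) (r : ℕ) (U : D → ℕ) (k : ι) : ℕ :=
  sigmaSum D U k / (p ^ r - 1)

/-- The shift `δ_r` on `{0, …, p^r − 1}`. -/
def shiftFun (p r u : ℕ) : ℕ := if u = p ^ r - 1 then u else (p * u) % (p ^ r - 1)

/-- The componentwise action of the shift `δ_r` on tuples. -/
def shiftE (p : ℕ) (D : Finset (ι → ℕ)) (r : ℕ) (U : D → ℕ) : D → ℕ :=
  fun d => shiftFun p r (U d)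

/-- The support `φ_U : ℤ/rℤ → ℕ^n` of a solution `U ∈ E_{D,p}(r)`. -/
def suppMap (p : ℕ) (D : Finset (ι → ℕ)) (r : ℕ) (U : D → ℕ) (k : ZMod r) : ι → ℕ :=
  phiMap p D r ((shiftE p D r)^[k.val] U)

/-- Membership in `MI_{D,p}(r)`: minimal irreducible solutions. -/
def memMI (p : ℕ) (D : Finset (ι → ℕ)) (r : ℕ) (U : D → ℕ) : Prop :=
  minimalSol p D r U ∧ Function.Injective (suppMap p D r U)

/-- The `p`-minimal support `Σ_p(D)`. -/
def minSupport (p : ℕ) (D : Finset (ι → ℕ)) : Set (ι → ℕ) :=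
  { e | ∃ r : ℕ, 1 ≤ r ∧ ∃ U : D → ℕ, memMI p D r U ∧ e ∈ Set.range (suppMap p D r U) }

/-- `ψ(U)`: the tuple of last base-`p` digits of `U`. -/
def psiMap (p : ℕ) (D : Finset (ι → ℕ)) (U : D → ℕ) : D → ℕ := fun d => U d % p

/-- The set `V(e, e')` of digit tuples of minimal irreducible solutions with
`φ_U(−1) = e` and `φ_U(0) = e'`. -/
def Vset (p : ℕ) (D : Finset (ι → ℕ)) (e e' : ι → ℕ) : Set (D → ℕ) :=
  { v | ∃ r : ℕ, 1 ≤ r ∧ ∃ U : D → ℕ, memMI p D r U ∧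
      suppMap p D r U (-1) = e ∧ suppMap p D r U 0 = e' ∧ psiMap p D U = v }

/-- The weight `w(V) = Σ_{d ∈ D} v_d`. -/
def weightV (D : Finset (ι → ℕ)) (v : D → ℕ) : ℕ := ∑ d, v d

section AuxLemmas

/-- Digit sum splits across a base-power decomposition. -/
lemma sp_split {p : ℕ} (hp : 1 < p) (a : ℕ) {b k : ℕ} (hb : b < p ^ k) :
    sp p (b + p ^ k * a) = sp p b + sp p a := by
  rcases Nat.eq_zero_or_pos a with rfl | ha
  · simp [sp]
  · have hlen : (Nat.digits p b).length ≤ k := by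
      rcases Nat.eq_zero_or_pos b with rfl | hb0
      · simp
      · rw [Nat.digits_len p b hp hb0.ne']
        have : Nat.log p b < k := Nat.log_lt_of_lt_pow hb0.ne' hb
        omega
    have h := Nat.digits_append_zeroes_append_digits (b := p)
      (k := k - (Nat.digits p b).length) (m := a) (n := b) hp ha
    rw [Nat.add_sub_cancel' hlen] at h
    unfold sp
    rw [← h]
    simp

lemma modEq_sum {α : Type} [Fintype α] (n : ℕ) (f g : α → ℕ)
    (h : ∀ a, f a ≡ g a [MOD n]) : (∑ a, f a) ≡ ∑ a, g a [MOD n] := by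
  show (∑ a, f a) % n = (∑ a, g a) % n
  rw [Finset.sum_nat_mod, Finset.sum_nat_mod _ n g]
  congr 1
  exact Finset.sum_congr rfl fun a _ => h a

lemma exists_pos_of_sum_pos {α : Type} [Fintype α] {f : α → ℕ} (h : 0 < ∑ a, f a) :
    ∃ a, 0 < f a := by
  by_contra hc
  push_neg at hc
  simp only [Nat.le_zero] at hc
  rw [Finset.sum_eq_zero fun a _ => hc a] at h
  exact lt_irrefl 0 h

lemma shiftE_iterate {ι : Type} [Fintype ι] (p : ℕ) (D : Finset (ι → ℕ)) (r n : ℕ)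
    (U : D → ℕ) (d : D) :
    (shiftE p D r)^[n] U d = (shiftFun p r)^[n] (U d) := by
  induction n generalizing U with
  | zero => rfl
  | succ n ih =>
    rw [Function.iterate_succ_apply, Function.iterate_succ_apply]
    exact ih (shiftE p D r U)

lemma shiftFun_iter_lt_modEq (p r : ℕ) (hM : 0 < p ^ r - 1) {u : ℕ} (hu : u < p ^ r - 1)
    (t : ℕ) :
    (shiftFun p r)^[t] u < p ^ r - 1 ∧ (shiftFun p r)^[t] u ≡ p ^ t * u [MOD p ^ r - 1] := by
  induction t with
  | zero => exact ⟨hu, by simpa using Nat.ModEq.refl u⟩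
  | succ t ih =>
    obtain ⟨hlt, hmod⟩ := ih
    have hne : (shiftFun p r)^[t] u ≠ p ^ r - 1 := Nat.ne_of_lt hlt
    have hstep' : ∀ v, v ≠ p ^ r - 1 → shiftFun p r v = (p * v) % (p ^ r - 1) := by
      intro v hv; unfold shiftFun; rw [if_neg hv]
    rw [Function.iterate_succ_apply', hstep' _ hne]
    refine ⟨Nat.mod_lt _ hM, ?_⟩
    calc (p * (shiftFun p r)^[t] u) % (p ^ r - 1)
        ≡ p * (shiftFun p r)^[t] u [MOD p ^ r - 1] := Nat.mod_modEq _ _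
      _ ≡ p * (p ^ t * u) [MOD p ^ r - 1] := hmod.mul_left p
      _ = p ^ (t + 1) * u := by ring

lemma rot_modEq_aux (p r t q s : ℕ) (ht : t ≤ r) (hp : 1 ≤ p) :
    s * p ^ t + q ≡ p ^ t * (p ^ (r - t) * q + s) [MOD p ^ r - 1] := by
  have hPp : p ^ (r - t) * p ^ t = p ^ r := by rw [← pow_add]; congr 1; omega
  have hpr1 : 1 ≤ p ^ r := Nat.one_le_pow _ _ (by omega)
  have h1 : p ^ t * (p ^ (r - t) * q + s) = s * p ^ t + q * p ^ r := by
    rw [← hPp]; ring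
  have h2 : p ^ r ≡ 1 [MOD p ^ r - 1] := by
    have he : p ^ r = (p ^ r - 1) + 1 := by omega
    rw [he]
    show ((p ^ r - 1) + 1) % (p ^ r - 1) = 1 % (p ^ r - 1)
    exact Nat.add_mod_left _ 1
  calc s * p ^ t + q
      = s * p ^ t + q * 1 := by ring
    _ ≡ s * p ^ t + q * p ^ r [MOD p ^ r - 1] :=
        Nat.ModEq.add_left _ (h2.symm.mul_left _)
    _ = p ^ t * (p ^ (r - t) * q + s) := h1.symm

/-- The "rotation" value is congruent to `p^t * u` mod `p^r - 1`. -/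
lemma rot_modEq (p r t : ℕ) (ht : t ≤ r) (hp : 1 ≤ p) (u : ℕ) :
    (u % p ^ (r - t)) * p ^ t + u / p ^ (r - t) ≡ p ^ t * u [MOD p ^ r - 1] := by
  have h := rot_modEq_aux p r t (u / p ^ (r - t)) (u % p ^ (r - t)) ht hp
  rwa [Nat.div_add_mod] at h

/-- Explicit formula for the iterated shift: it rotates the `r` base-`p` digits. -/
lemma shiftFun_iter_eq (p r t : ℕ) (hp : 2 ≤ p) (hM : 1 < p ^ r - 1) (ht : t ≤ r)
    {u : ℕ} (hu : u ≤ p ^ r - 1) :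
    (shiftFun p r)^[t] u = (u % p ^ (r - t)) * p ^ t + u / p ^ (r - t) := by
  have hP0 : 0 < p ^ (r - t) := Nat.pow_pos (by omega)
  have hpt0 : 0 < p ^ t := Nat.pow_pos (by omega)
  have hPp : p ^ (r - t) * p ^ t = p ^ r := by rw [← pow_add]; congr 1; omega
  have hM0 : 0 < p ^ r - 1 := by omega
  rcases eq_or_lt_of_le hu with heq | hlt
  · rw [heq]
    have hfix : (shiftFun p r)^[t] (p ^ r - 1) = p ^ r - 1 :=
      Function.iterate_fixed (by unfold shiftFun; rw [if_pos rfl]) t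
    rw [hfix]
    have hle : p ^ (r - t) ≤ p ^ r := by
      calc p ^ (r - t) ≤ p ^ (r - t) * p ^ t := Nat.le_mul_of_pos_right _ hpt0
        _ = p ^ r := hPp
    have hsub : p ^ (r - t) * (p ^ t - 1) = p ^ (r - t) * p ^ t - p ^ (r - t) := by
      rw [Nat.mul_sub, Nat.mul_one]
    have hdecomp : p ^ r - 1 = (p ^ (r - t) - 1) + p ^ (r - t) * (p ^ t - 1) := by omega
    have hmod : (p ^ r - 1) % p ^ (r - t) = p ^ (r - t) - 1 := by
      rw [hdecomp, Nat.add_mul_mod_self_left]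
      exact Nat.mod_eq_of_lt (by omega)
    have hdiv : (p ^ r - 1) / p ^ (r - t) = p ^ t - 1 := by
      rw [hdecomp, Nat.add_mul_div_left _ _ hP0, Nat.div_eq_of_lt (by omega), Nat.zero_add]
    rw [hmod, hdiv]
    have hsm : (p ^ (r - t) - 1) * p ^ t = p ^ (r - t) * p ^ t - p ^ t := by
      rw [Nat.sub_mul, one_mul]
    have : p ^ t ≤ p ^ (r - t) * p ^ t := Nat.le_mul_of_pos_left _ hP0
    omega
  · obtain ⟨hlt', hmod'⟩ := shiftFun_iter_lt_modEq p r hM0 hlt t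
    have hRmod := rot_modEq p r t ht (by omega) u
    have hq : u / p ^ (r - t) < p ^ t := by
      apply (Nat.div_lt_iff_lt_mul hP0).mpr
      rw [mul_comm, hPp]
      omega
    have hs : u % p ^ (r - t) < p ^ (r - t) := Nat.mod_lt _ hP0
    have hRle : (u % p ^ (r - t)) * p ^ t + u / p ^ (r - t) ≤ p ^ r - 1 := by
      have h1 : (u % p ^ (r - t)) * p ^ t ≤ (p ^ (r - t) - 1) * p ^ t :=
        Nat.mul_le_mul_right _ (by omega)
      have h2 : (p ^ (r - t) - 1) * p ^ t = p ^ (r - t) * p ^ t - p ^ t := by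
        rw [Nat.sub_mul, one_mul]
      have h3 : p ^ t ≤ p ^ (r - t) * p ^ t := Nat.le_mul_of_pos_left _ hP0
      omega
    rcases lt_or_eq_of_le hRle with hRlt | hReq
    · have hcong : (shiftFun p r)^[t] u ≡
          (u % p ^ (r - t)) * p ^ t + u / p ^ (r - t) [MOD p ^ r - 1] :=
        hmod'.trans hRmod.symm
      have h : (shiftFun p r)^[t] u % (p ^ r - 1)
          = ((u % p ^ (r - t)) * p ^ t + u / p ^ (r - t)) % (p ^ r - 1) := hcong
      rwa [Nat.mod_eq_of_lt hlt', Nat.mod_eq_of_lt hRlt] at h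
    · exfalso
      have hdvd : (p ^ r - 1) ∣ p ^ t * u := by
        have h0 : p ^ t * u ≡ p ^ r - 1 [MOD p ^ r - 1] := by
          have h0' := hRmod.symm
          rwa [hReq] at h0'
        have h1 : (p ^ r - 1 : ℕ) ≡ 0 [MOD p ^ r - 1] :=
          (Nat.modEq_zero_iff_dvd).mpr dvd_rfl
        exact (Nat.modEq_zero_iff_dvd).mp (h0.trans h1)
      have hcop : Nat.Coprime (p ^ r - 1) (p ^ t) := by
        have h2 : Nat.gcd ((p ^ r - 1) + 1) (p ^ r - 1) = 1 := by
          rw [Nat.gcd_self_add_left, Nat.gcd_one_left]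
        have he : (p ^ r - 1) + 1 = p ^ r := by omega
        rw [he] at h2
        exact (Nat.Coprime.symm h2).coprime_dvd_right (pow_dvd_pow p ht)
      have hdvdu : (p ^ r - 1) ∣ u := hcop.dvd_of_dvd_mul_left hdvd
      have hu0 : u = 0 := Nat.eq_zero_of_dvd_of_lt hdvdu hlt
      rw [hu0] at hReq
      simp at hReq
      omega

end AuxLemmas

section AuxLemmas2

variable {ι : Type} [Fintype ι]

lemma memE_iter {p : ℕ} (hp : 2 ≤ p) {D : Finset (ι → ℕ)} {r t : ℕ}
    (hM : 1 < p ^ r - 1) (ht : t ≤ r) {U : D → ℕ} (hU : memE p D r U) :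
    memE p D r ((shiftE p D r)^[t] U) ∧ spU p D ((shiftE p D r)^[t] U) = spU p D U := by
  have hP0 : 0 < p ^ (r - t) := Nat.pow_pos (by omega)
  have hpt0 : 0 < p ^ t := Nat.pow_pos (by omega)
  have hPp : p ^ (r - t) * p ^ t = p ^ r := by rw [← pow_add]; congr 1; omega
  have hcomp : ∀ d : D, (shiftE p D r)^[t] U d
      = (U d % p ^ (r - t)) * p ^ t + U d / p ^ (r - t) := fun d => by
    rw [shiftE_iterate]; exact shiftFun_iter_eq p r t hp hM ht (hU.1 d)
  obtain ⟨hb, hdp⟩ := hU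
  refine ⟨⟨?_, ?_⟩, ?_⟩
  · intro d
    rw [hcomp d]
    have h1 : U d % p ^ (r - t) ≤ p ^ (r - t) - 1 := by
      have := Nat.mod_lt (U d) hP0; omega
    have h2 : U d / p ^ (r - t) ≤ p ^ t - 1 := by
      have h2' : U d / p ^ (r - t) < p ^ t := by
        apply (Nat.div_lt_iff_lt_mul hP0).mpr
        rw [mul_comm, hPp]
        have := hb d; omega
      omega
    have h3 : (U d % p ^ (r - t)) * p ^ t ≤ (p ^ (r - t) - 1) * p ^ t :=
      Nat.mul_le_mul_right _ h1
    have h4 : (p ^ (r - t) - 1) * p ^ t = p ^ (r - t) * p ^ t - p ^ t := by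
      rw [Nat.sub_mul, one_mul]
    have h5 : p ^ t ≤ p ^ (r - t) * p ^ t := Nat.le_mul_of_pos_left _ hP0
    omega
  · intro k
    have hmod : sigmaSum D ((shiftE p D r)^[t] U) k
        ≡ p ^ t * sigmaSum D U k [MOD p ^ r - 1] := by
      unfold sigmaSum
      rw [Finset.mul_sum]
      apply modEq_sum
      intro d
      rw [hcomp d]
      have base := (rot_modEq p r t ht (by omega) (U d)).mul_right ((d : ι → ℕ) k)
      calc ((U d % p ^ (r - t)) * p ^ t + U d / p ^ (r - t)) * (d : ι → ℕ) k
          ≡ (p ^ t * U d) * (d : ι → ℕ) k [MOD p ^ r - 1] := base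
        _ = p ^ t * (U d * (d : ι → ℕ) k) := by ring
    constructor
    · have hdvd : (p ^ r - 1) ∣ p ^ t * sigmaSum D U k :=
        Dvd.dvd.mul_left (hdp k).1 _
      exact (Nat.modEq_zero_iff_dvd).mp
        (hmod.trans ((Nat.modEq_zero_iff_dvd).mpr hdvd))
    · obtain ⟨d₀, hd₀⟩ := exists_pos_of_sum_pos (hdp k).2
      have hU0 : 0 < U d₀ := by
        rcases Nat.eq_zero_or_pos (U d₀) with h | h
        · rw [h] at hd₀; simp at hd₀
        · exact h
      have hk0 : 0 < (d₀ : ι → ℕ) k := by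
        rcases Nat.eq_zero_or_pos ((d₀ : ι → ℕ) k) with h | h
        · rw [h] at hd₀; simp at hd₀
        · exact h
      have hv : 0 < (shiftE p D r)^[t] U d₀ := by
        rw [hcomp d₀]
        rcases Nat.eq_zero_or_pos (U d₀ / p ^ (r - t)) with h' | h'
        · have hdm := Nat.div_add_mod (U d₀) (p ^ (r - t))
          rw [h', Nat.mul_zero, Nat.zero_add] at hdm
          have hs : 0 < U d₀ % p ^ (r - t) := by rw [hdm]; exact hU0
          have := Nat.mul_pos hs hpt0
          omega
        · omega
      calc 0 < (shiftE p D r)^[t] U d₀ * (d₀ : ι → ℕ) k := Nat.mul_pos hv hk0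
        _ ≤ ∑ d : D, (shiftE p D r)^[t] U d * (d : ι → ℕ) k :=
            Finset.single_le_sum (f := fun d : D => (shiftE p D r)^[t] U d * (d : ι → ℕ) k)
              (fun i _ => Nat.zero_le _) (Finset.mem_univ d₀)
  · unfold spU
    apply Finset.sum_congr rfl
    intro d _
    rw [hcomp d]
    have hq : U d / p ^ (r - t) < p ^ t := by
      apply (Nat.div_lt_iff_lt_mul hP0).mpr
      rw [mul_comm, hPp]
      have := hb d
      have : 1 ≤ p ^ r := by omega
      omega
    have hcm : (U d % p ^ (r - t)) * p ^ t + U d / p ^ (r - t)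
        = U d / p ^ (r - t) + p ^ t * (U d % p ^ (r - t)) := by ring
    rw [hcm, sp_split (by omega : 1 < p) _ hq]
    have hrest : U d = U d % p ^ (r - t) + p ^ (r - t) * (U d / p ^ (r - t)) := by
      have := Nat.div_add_mod (U d) (p ^ (r - t)); omega
    conv_rhs => rw [hrest]
    rw [sp_split (by omega : 1 < p) _ (Nat.mod_lt _ hP0)]
    exact Nat.add_comm _ _

lemma split_lemma {p : ℕ} (hp : 2 ≤ p) {D : Finset (ι → ℕ)} {r t : ℕ}
    (ht1 : 1 ≤ t) (htr : t < r) {U : D → ℕ} (hU : memE p D r U)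
    (heq : ∀ k, sigmaSum D ((shiftE p D r)^[t] U) k = sigmaSum D U k) :
    memE p D t (fun d => U d / p ^ (r - t)) ∧
    memE p D (r - t) (fun d => U d % p ^ (r - t)) ∧
    spU p D (fun d => U d / p ^ (r - t)) + spU p D (fun d => U d % p ^ (r - t))
      = spU p D U := by
  have hr2 : 2 ≤ r := by omega
  have hpr4 : 4 ≤ p ^ r := by
    calc (4 : ℕ) = 2 ^ 2 := by norm_num
      _ ≤ p ^ 2 := Nat.pow_le_pow_left hp 2
      _ ≤ p ^ r := Nat.pow_le_pow_right (by omega) hr2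
  have hM : 1 < p ^ r - 1 := by omega
  have hP0 : 0 < p ^ (r - t) := Nat.pow_pos (by omega)
  have hpt0 : 0 < p ^ t := Nat.pow_pos (by omega)
  have hpt2 : 2 ≤ p ^ t := by
    calc (2 : ℕ) ≤ p := hp
      _ = p ^ 1 := (pow_one p).symm
      _ ≤ p ^ t := Nat.pow_le_pow_right (by omega) ht1
  have hP2 : 2 ≤ p ^ (r - t) := by
    calc (2 : ℕ) ≤ p := hp
      _ = p ^ 1 := (pow_one p).symm
      _ ≤ p ^ (r - t) := Nat.pow_le_pow_right (by omega) (by omega)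
  have hPp : p ^ (r - t) * p ^ t = p ^ r := by rw [← pow_add]; congr 1; omega
  have hcomp : ∀ d : D, (shiftE p D r)^[t] U d
      = (U d % p ^ (r - t)) * p ^ t + U d / p ^ (r - t) := fun d => by
    rw [shiftE_iterate]; exact shiftFun_iter_eq p r t hp hM (le_of_lt htr) (hU.1 d)
  have main : ∀ k : ι, ∃ a : ℕ, 0 < a ∧
      sigmaSum D (fun d => U d / p ^ (r - t)) k = a * (p ^ t - 1) ∧
      sigmaSum D (fun d => U d % p ^ (r - t)) k = a * (p ^ (r - t) - 1) := by
    intro k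
    obtain ⟨hdvd, hpos⟩ := hU.2 k
    obtain ⟨a, ha⟩ := hdvd
    have ha0 : 0 < a := by
      rcases Nat.eq_zero_or_pos a with rfl | h
      · rw [ha] at hpos; simp at hpos
      · exact h
    have e1 : sigmaSum D (fun d => U d % p ^ (r - t)) k * p ^ t
        + sigmaSum D (fun d => U d / p ^ (r - t)) k = (p ^ r - 1) * a := by
      rw [← ha, ← heq k]
      unfold sigmaSum
      rw [Finset.sum_mul, ← Finset.sum_add_distrib]
      apply Finset.sum_congr rfl
      intro d _
      rw [hcomp d]
      ring
    have e2 : sigmaSum D (fun d => U d / p ^ (r - t)) k * p ^ (r - t)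
        + sigmaSum D (fun d => U d % p ^ (r - t)) k = (p ^ r - 1) * a := by
      rw [← ha]
      unfold sigmaSum
      rw [Finset.sum_mul, ← Finset.sum_add_distrib]
      apply Finset.sum_congr rfl
      intro d _
      have hdm : p ^ (r - t) * (U d / p ^ (r - t)) + U d % p ^ (r - t) = U d :=
        Nat.div_add_mod (U d) _
      calc U d / p ^ (r - t) * (d : ι → ℕ) k * p ^ (r - t)
            + U d % p ^ (r - t) * (d : ι → ℕ) k
          = (p ^ (r - t) * (U d / p ^ (r - t)) + U d % p ^ (r - t)) * (d : ι → ℕ) k := by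
            ring
        _ = U d * (d : ι → ℕ) k := by rw [hdm]
    set X := sigmaSum D (fun d => U d / p ^ (r - t)) k with hXdef
    set Y := sigmaSum D (fun d => U d % p ^ (r - t)) k with hYdef
    have hpr1 : 1 ≤ p ^ r := by omega
    have hpt1 : 1 ≤ p ^ t := by omega
    have hP1 : 1 ≤ p ^ (r - t) := by omega
    have e1' : (Y : ℤ) * (p : ℤ) ^ t + (X : ℤ) = ((p : ℤ) ^ r - 1) * (a : ℤ) := by
      have := congrArg (fun n : ℕ => (n : ℤ)) e1
      push_cast [Nat.cast_sub hpr1] at this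
      convert this using 2 <;> push_cast <;> ring
    have e2' : (X : ℤ) * (p : ℤ) ^ (r - t) + (Y : ℤ) = ((p : ℤ) ^ r - 1) * (a : ℤ) := by
      have := congrArg (fun n : ℕ => (n : ℤ)) e2
      push_cast [Nat.cast_sub hpr1] at this
      convert this using 2 <;> push_cast <;> ring
    have hPpZ : ((p : ℤ)) ^ (r - t) * (p : ℤ) ^ t = (p : ℤ) ^ r := by exact_mod_cast hPp
    have hMne : ((p : ℤ) ^ r - 1) ≠ 0 := by
      have : (4 : ℤ) ≤ (p : ℤ) ^ r := by exact_mod_cast hpr4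
      omega
    have e3 : (X : ℤ) * ((p : ℤ) ^ r - 1)
        = (a : ℤ) * ((p : ℤ) ^ t - 1) * ((p : ℤ) ^ r - 1) := by
      linear_combination ((p : ℤ) ^ t) * e2' - e1' - (X : ℤ) * hPpZ
    have hXZ : (X : ℤ) = (a : ℤ) * ((p : ℤ) ^ t - 1) := mul_right_cancel₀ hMne e3
    have hYZ : (Y : ℤ) = (a : ℤ) * ((p : ℤ) ^ (r - t) - 1) := by
      linear_combination e2' - ((p : ℤ) ^ (r - t)) * hXZ - (a : ℤ) * hPpZ
    refine ⟨a, ha0, ?_, ?_⟩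
    · have : (X : ℤ) = ((a * (p ^ t - 1) : ℕ) : ℤ) := by
        push_cast [Nat.cast_sub hpt1]; rw [hXZ]
      exact_mod_cast this
    · have : (Y : ℤ) = ((a * (p ^ (r - t) - 1) : ℕ) : ℤ) := by
        push_cast [Nat.cast_sub hP1]; rw [hYZ]
      exact_mod_cast this
  refine ⟨⟨fun d => ?_, fun k => ?_⟩, ⟨fun d => ?_, fun k => ?_⟩, ?_⟩
  · show U d / p ^ (r - t) ≤ p ^ t - 1
    have h2' : U d / p ^ (r - t) < p ^ t := by
      apply (Nat.div_lt_iff_lt_mul hP0).mpr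
      rw [mul_comm, hPp]
      have := hU.1 d; omega
    omega
  · obtain ⟨a, ha0, hX, hY⟩ := main k
    rw [hX]
    exact ⟨dvd_mul_left _ _, Nat.mul_pos ha0 (by omega)⟩
  · show U d % p ^ (r - t) ≤ p ^ (r - t) - 1
    have := Nat.mod_lt (U d) hP0; omega
  · obtain ⟨a, ha0, hX, hY⟩ := main k
    rw [hY]
    exact ⟨dvd_mul_left _ _, Nat.mul_pos ha0 (by omega)⟩
  · unfold spU
    rw [← Finset.sum_add_distrib]
    apply Finset.sum_congr rfl
    intro d _
    have h1 : U d % p ^ (r - t) < p ^ (r - t) := Nat.mod_lt _ hP0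
    have hrest : U d = U d % p ^ (r - t) + p ^ (r - t) * (U d / p ^ (r - t)) := by
      have := Nat.div_add_mod (U d) (p ^ (r - t)); omega
    conv_rhs => rw [hrest]
    rw [sp_split (by omega : 1 < p) _ h1]
    exact Nat.add_comm _ _

end AuxLemmas2

/-- The set `{ s_{D,p}(r)/r : r ≥ 1 }` of rational numbers has a minimum. -/
theorem sDp_ratio_has_min (p : ℕ) (hp : p.Prime) {ι : Type} [Fintype ι] [Nonempty ι]
    (D : Finset (ι → ℕ)) (hD : D.Nonempty)
    (hcoord : ∀ k : ι, ∃ d ∈ D, 0 < d k) :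
    ∃ r₀ : ℕ, 1 ≤ r₀ ∧ ∀ r : ℕ, 1 ≤ r →
      (sDp p D r₀ : ℚ) / (r₀ : ℚ) ≤ (sDp p D r : ℚ) / (r : ℚ) := by
  classical
  have hp2 : 2 ≤ p := hp.two_le
  set B : ℕ := Finset.univ.sup (fun k : ι => ∑ d : D, (d : ι → ℕ) k) with hBdef
  set N : ℕ := Fintype.card (ι → Fin (B + 1)) with hNdef
  have hN1 : 1 ≤ N := Fintype.card_pos
  -- existence of minimal solutions
  have hEx : ∀ r : ℕ, 1 ≤ r → ∃ U, memE p D r U ∧ spU p D U = sDp p D r := by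
    intro r hr
    have hMpos : 0 < p ^ r - 1 := by
      have : 2 ≤ p ^ r := by
        calc (2 : ℕ) ≤ p := hp2
          _ = p ^ 1 := (pow_one p).symm
          _ ≤ p ^ r := Nat.pow_le_pow_right (by omega) hr
      omega
    have hne : {s | ∃ U, memE p D r U ∧ spU p D U = s}.Nonempty := by
      refine ⟨spU p D (fun _ => p ^ r - 1), fun _ => p ^ r - 1,
        ⟨fun d => le_refl _, fun k => ?_⟩, rfl⟩
      have hsig : sigmaSum D (fun _ => p ^ r - 1) k
          = (p ^ r - 1) * ∑ d : D, (d : ι → ℕ) k := by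
        unfold sigmaSum
        rw [Finset.mul_sum]
      rw [hsig]
      constructor
      · exact dvd_mul_right _ _
      · apply Nat.mul_pos hMpos
        obtain ⟨d, hd, hdk⟩ := hcoord k
        calc 0 < (⟨d, hd⟩ : D).1 k := hdk
          _ ≤ ∑ d : D, (d : ι → ℕ) k :=
            Finset.single_le_sum (f := fun d : D => (d : ι → ℕ) k)
              (fun i _ => Nat.zero_le _) (Finset.mem_univ _)
    obtain ⟨U, hU, hs⟩ := Nat.sInf_mem hne
    exact ⟨U, hU, hs⟩
  have hLe : ∀ r (U : D → ℕ), memE p D r U → sDp p D r ≤ spU p D U :=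
    fun r U hU => Nat.sInf_le ⟨U, hU, rfl⟩
  -- reduction for large r
  have hred : ∀ r : ℕ, N < r → ∀ U : D → ℕ, memE p D r U →
      ∃ t, 1 ≤ t ∧ t < r ∧ sDp p D t + sDp p D (r - t) ≤ spU p D U := by
    intro r hr U hU
    have hr2 : 2 ≤ r := by omega
    have hpr4 : 4 ≤ p ^ r := by
      calc (4 : ℕ) = 2 ^ 2 := by norm_num
        _ ≤ p ^ 2 := Nat.pow_le_pow_left hp2 2
        _ ≤ p ^ r := Nat.pow_le_pow_right (by omega) hr2
    have hM : 1 < p ^ r - 1 := by omega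
    have hM0 : 0 < p ^ r - 1 := by omega
    have hphi_lt : ∀ i : Fin r, ∀ k : ι,
        phiMap p D r ((shiftE p D r)^[i.val] U) k < B + 1 := by
      intro i k
      have hE := (memE_iter hp2 hM (le_of_lt i.2) hU).1
      have hb : sigmaSum D ((shiftE p D r)^[i.val] U) k
          ≤ (p ^ r - 1) * ∑ d : D, (d : ι → ℕ) k := by
        unfold sigmaSum
        rw [Finset.mul_sum]
        apply Finset.sum_le_sum
        intro d _
        exact Nat.mul_le_mul_right _ (hE.1 d)
      have h1 : phiMap p D r ((shiftE p D r)^[i.val] U) k ≤ ∑ d : D, (d : ι → ℕ) k := by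
        unfold phiMap
        calc sigmaSum D ((shiftE p D r)^[i.val] U) k / (p ^ r - 1)
            ≤ ((p ^ r - 1) * ∑ d : D, (d : ι → ℕ) k) / (p ^ r - 1) :=
              Nat.div_le_div_right hb
          _ = ∑ d : D, (d : ι → ℕ) k := Nat.mul_div_cancel_left _ hM0
      have hBle : (∑ d : D, (d : ι → ℕ) k) ≤ B :=
        Finset.le_sup (f := fun k : ι => ∑ d : D, (d : ι → ℕ) k) (Finset.mem_univ k)
      omega
    have hcard : Fintype.card (ι → Fin (B + 1)) < Fintype.card (Fin r) := by
      rw [Fintype.card_fin, ← hNdef]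
      exact hr
    obtain ⟨i, j, hij, hfij⟩ := Fintype.exists_ne_map_eq_of_card_lt
      (fun (i : Fin r) (k : ι) =>
        (⟨phiMap p D r ((shiftE p D r)^[i.val] U) k, hphi_lt i k⟩ : Fin (B + 1))) hcard
    have key : ∀ i j : Fin r, i.val < j.val →
        (∀ k : ι, phiMap p D r ((shiftE p D r)^[i.val] U) k
          = phiMap p D r ((shiftE p D r)^[j.val] U) k) →
        ∃ t, 1 ≤ t ∧ t < r ∧ sDp p D t + sDp p D (r - t) ≤ spU p D U := by
      intro i j hlt hfeq
      obtain ⟨hU'E, hU'sp⟩ := memE_iter hp2 hM (le_of_lt i.2) hU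
      set U' := (shiftE p D r)^[i.val] U with hU'def
      set t := j.val - i.val with htdef
      have ht1 : 1 ≤ t := by omega
      have htr : t < r := by have := j.2; omega
      have hiter : (shiftE p D r)^[t] U' = (shiftE p D r)^[j.val] U := by
        rw [hU'def, ← Function.iterate_add_apply]
        congr 1
        omega
      have hEj := (memE_iter hp2 hM (le_of_lt j.2) hU).1
      have heq : ∀ k, sigmaSum D ((shiftE p D r)^[t] U') k = sigmaSum D U' k := by
        intro k
        have h1 : phiMap p D r ((shiftE p D r)^[j.val] U) k = phiMap p D r U' k :=
          (hfeq k).symm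
        have hd1 := (hEj.2 k).1
        have hd2 := (hU'E.2 k).1
        rw [hiter]
        unfold phiMap at h1
        have h2 := congrArg (· * (p ^ r - 1)) h1
        simpa only [Nat.div_mul_cancel hd1, Nat.div_mul_cancel hd2] using h2
      obtain ⟨hHE, hLE, hsp⟩ := split_lemma hp2 ht1 htr hU'E heq
      refine ⟨t, ht1, htr, ?_⟩
      calc sDp p D t + sDp p D (r - t)
          ≤ spU p D (fun d => U' d / p ^ (r - t)) + spU p D (fun d => U' d % p ^ (r - t)) :=
            Nat.add_le_add (hLe t _ hHE) (hLe (r - t) _ hLE)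
        _ = spU p D U' := hsp
        _ = spU p D U := hU'sp
    have hval : ∀ i j : Fin r,
        ((fun (i : Fin r) (k : ι) =>
          (⟨phiMap p D r ((shiftE p D r)^[i.val] U) k, hphi_lt i k⟩ : Fin (B + 1))) i
        = (fun (i : Fin r) (k : ι) =>
          (⟨phiMap p D r ((shiftE p D r)^[i.val] U) k, hphi_lt i k⟩ : Fin (B + 1))) j) →
        ∀ k : ι, phiMap p D r ((shiftE p D r)^[i.val] U) k
          = phiMap p D r ((shiftE p D r)^[j.val] U) k := by
      intro i j h k
      have := congrFun h k
      exact congrArg Fin.val this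
    rcases hij.lt_or_gt with h | h
    · exact key i j h (hval i j hfij)
    · exact key j i h (hval j i hfij.symm)
  -- strong induction: every ratio is dominated by one with index ≤ N
  have hmain : ∀ r : ℕ, 1 ≤ r → ∃ r', 1 ≤ r' ∧ r' ≤ N ∧
      (sDp p D r' : ℚ) / (r' : ℚ) ≤ (sDp p D r : ℚ) / (r : ℚ) := by
    intro r
    induction r using Nat.strong_induction_on with
    | _ r ih =>
      intro hr1
      by_cases hrN : r ≤ N
      · exact ⟨r, hr1, hrN, le_refl _⟩
      · push_neg at hrN
        obtain ⟨U, hU, hUsp⟩ := hEx r hr1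
        obtain ⟨t, ht1, htr, hsum⟩ := hred r hrN U hU
        have hrt1 : 1 ≤ r - t := by omega
        have htQ : (0 : ℚ) < (t : ℚ) := by exact_mod_cast ht1
        have hrtQ : (0 : ℚ) < ((r - t : ℕ) : ℚ) := by exact_mod_cast hrt1
        have hrQ : (0 : ℚ) < (r : ℚ) := by exact_mod_cast hr1
        have hsplitQ : ((t : ℚ) + ((r - t : ℕ) : ℚ)) = (r : ℚ) := by
          have h : t + (r - t) = r := by omega
          exact_mod_cast congrArg (fun n : ℕ => (n : ℚ)) h
        have hmed : (sDp p D t : ℚ) / (t : ℚ)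
              ≤ ((sDp p D t : ℚ) + (sDp p D (r - t) : ℚ)) / (r : ℚ) ∨
            (sDp p D (r - t) : ℚ) / ((r - t : ℕ) : ℚ)
              ≤ ((sDp p D t : ℚ) + (sDp p D (r - t) : ℚ)) / (r : ℚ) := by
          rcases le_total ((sDp p D t) * (r - t)) ((sDp p D (r - t)) * t) with hcase | hcase
          · left
            rw [div_le_div_iff₀ htQ hrQ]
            have hc : (sDp p D t : ℚ) * ((r - t : ℕ) : ℚ)
                ≤ (sDp p D (r - t) : ℚ) * (t : ℚ) := by exact_mod_cast hcase
            nlinarith [hsplitQ]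
          · right
            rw [div_le_div_iff₀ hrtQ hrQ]
            have hc : (sDp p D (r - t) : ℚ) * (t : ℚ)
                ≤ (sDp p D t : ℚ) * ((r - t : ℕ) : ℚ) := by exact_mod_cast hcase
            nlinarith [hsplitQ]
        have hles : ((sDp p D t : ℚ) + (sDp p D (r - t) : ℚ)) / (r : ℚ)
            ≤ (sDp p D r : ℚ) / (r : ℚ) := by
          have hnum : (sDp p D t : ℚ) + (sDp p D (r - t) : ℚ) ≤ (sDp p D r : ℚ) := by
            have : sDp p D t + sDp p D (r - t) ≤ sDp p D r := by
              rw [← hUsp]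
              exact hsum
            exact_mod_cast this
          exact div_le_div_of_nonneg_right hnum hrQ.le
        rcases hmed with hm | hm
        · obtain ⟨r', h1, h2, h3⟩ := ih t (by omega) ht1
          exact ⟨r', h1, h2, h3.trans (hm.trans hles)⟩
        · obtain ⟨r', h1, h2, h3⟩ := ih (r - t) (by omega) hrt1
          exact ⟨r', h1, h2, h3.trans (hm.trans hles)⟩
  obtain ⟨r₀, hr₀mem, hr₀min⟩ := Finset.exists_min_image (Finset.Icc 1 N)
    (fun r => (sDp p D r : ℚ) / (r : ℚ)) ⟨1, Finset.mem_Icc.mpr ⟨le_refl 1, hN1⟩⟩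
  rw [Finset.mem_Icc] at hr₀mem
  refine ⟨r₀, hr₀mem.1, fun r hr => ?_⟩
  obtain ⟨r', h1, h2, h3⟩ := hmain r hr
  exact (hr₀min r' (Finset.mem_Icc.mpr ⟨h1, h2⟩)).trans h3
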